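/- Let p be an odd prime. Then there exists a matrix A ∈ SL(3,ℚ_p) whose characteristic polynomial is irreducible over ℚ_p and which is not a product of two symmetric matrices belonging to SL(3,ℚ_p); in particular, A is not conjugate to its transpose ᵗA by any element of SL(3,ℚ_p). -/

import Mathlib

open Matrix Polynomial

section Aux

variable {R : Type*} [CommRing R]

/-- companion-type matrix of `X^3 + a X^2 + b X - 1`. -/
def Mcomp (a b : R) : Matrix (Fin 3) (Fin 3) R := !![0,0,1; 1,0,-b; 0,1,-a]

/-- the cubic `X^3 + a X^2 + b X - 1`. -/
noncomputable def fpoly (a b : R) : R[X] := X^3 + C a * X^2 + C b * X - 1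

lemma fpoly_monic (a b : R) : (fpoly a b).Monic := by
  unfold fpoly; monicity!

lemma fpoly_natDegree [Nontrivial R] (a b : R) : (fpoly a b).natDegree = 3 := by
  unfold fpoly; compute_degree!

lemma charpoly_Mcomp (a b : R) : (Mcomp a b).charpoly = fpoly a b := by
  rw [Matrix.charpoly, Matrix.det_fin_three]
  simp [Mcomp, charmatrix_apply, fpoly, Matrix.one_apply]
  ring

lemma aeval_Mcomp (a b : R) : aeval (Mcomp a b) (fpoly a b) = 0 := by
  rw [← charpoly_Mcomp]; exact Matrix.aeval_self_charpoly _


lemma comm_Mcomp {a b : R} {B : Matrix (Fin 3) (Fin 3) R}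
    (h : B * Mcomp a b = Mcomp a b * B) :
    B = B 0 0 • 1 + B 1 0 • Mcomp a b + B 2 0 • (Mcomp a b)^2 := by
  have e : ∀ i j : Fin 3, (B * Mcomp a b) i j = (Mcomp a b * B) i j := fun i j => by rw [h]
  have e00 := e 0 0; have e01 := e 0 1; have e02 := e 0 2
  have e10 := e 1 0; have e11 := e 1 1; have e12 := e 1 2
  have e20 := e 2 0; have e21 := e 2 1; have e22 := e 2 2
  simp [Mcomp, Matrix.mul_apply, Fin.sum_univ_three] at e00 e01 e02 e10 e11 e12 e20 e21 e22
  ext i j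
  fin_cases i <;> fin_cases j <;>
    simp [Mcomp, pow_two, Matrix.mul_apply, Fin.sum_univ_three, Matrix.one_apply] <;>
  [ (linear_combination e00);
    (linear_combination e01 + e20);
    (linear_combination e10);
    (linear_combination -e22 - b * e20);
    (linear_combination e20);
    (linear_combination e21 + e10 - a * e20)]


lemma isUnit_combo {K : Type*} [Field K] {a b d₀ d₁ d₂ : K}
    (hirr : Irreducible (fpoly a b)) (hd : ¬(d₀ = 0 ∧ d₁ = 0 ∧ d₂ = 0)) :
    IsUnit (d₀ • (1 : Matrix (Fin 3) (Fin 3) K) + d₁ • Mcomp a b + d₂ • (Mcomp a b)^2) := by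
  set g : K[X] := C d₀ + C d₁ * X + C d₂ * X^2 with hg
  have hgne : g ≠ 0 := by
    intro h0
    have h0' := congrArg (fun q => (Polynomial.coeff q 0, Polynomial.coeff q 1, Polynomial.coeff q 2)) h0
    simp [hg, coeff_add, coeff_C, coeff_X, coeff_X_pow] at h0'
    exact hd ⟨h0'.1, h0'.2.1, h0'.2.2⟩
  have hdeg : g.natDegree ≤ 2 := by unfold g; compute_degree
  have hndvd : ¬ (fpoly a b ∣ g) := fun hdvd => by
    have := Polynomial.natDegree_le_of_dvd hdvd hgne
    rw [fpoly_natDegree] at this; omega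
  obtain ⟨u, v, huv⟩ := (hirr.coprime_iff_not_dvd.mpr hndvd)
  have := congrArg (aeval (Mcomp a b)) huv
  simp only [map_add, _root_.map_mul, _root_.map_one, aeval_Mcomp, mul_zero, zero_add] at this
  have hcomm : aeval (Mcomp a b) v * aeval (Mcomp a b) g
      = aeval (Mcomp a b) g * aeval (Mcomp a b) v := by
    rw [← _root_.map_mul, ← _root_.map_mul, mul_comm]
  have hdet : (aeval (Mcomp a b) v).det * (aeval (Mcomp a b) g).det = 1 := by
    rw [← Matrix.det_mul, this, Matrix.det_one]
  have hunit : IsUnit (aeval (Mcomp a b) g) := by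
    rw [Matrix.isUnit_iff_isUnit_det]
    exact IsUnit.of_mul_eq_one _ ((mul_comm (aeval (Mcomp a b) g).det (aeval (Mcomp a b) v).det).trans hdet)
  have heq : aeval (Mcomp a b) g
      = d₀ • (1 : Matrix (Fin 3) (Fin 3) K) + d₁ • Mcomp a b + d₂ • (Mcomp a b)^2 := by
    simp [hg, map_add, _root_.map_mul, aeval_C, aeval_X, map_pow,
      Algebra.algebraMap_eq_smul_one, smul_mul_assoc, one_mul]
  rwa [heq] at hunit


lemma exists_irred (p : ℕ) [hp : Fact p.Prime] :
    ∃ a b : ZMod p, Irreducible (fpoly a b) := by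
  have hp2 : 2 ≤ p := hp.out.two_le
  set L := GaloisField p 3 with hL
  set n := p^2 + p + 1 with hn
  -- basic numerology
  have hsq : p ≤ p^2 := Nat.le_self_pow (by norm_num) p
  have hsq' : p + p ≤ p^2 := by nlinarith
  have hfact : p^3 - 1 = (p-1) * n := by
    have h3 : p^3 = p^2 * p := by ring
    have h2 : p^2 = p * p := by ring
    have h1 : 1 ≤ p := by omega
    have h1' : 1 ≤ p^3 := by nlinarith
    zify [h1, h1']
    push_cast [hn]
    ring
  -- a generator
  obtain ⟨g, hg⟩ := IsCyclic.exists_ofOrder_eq_natCard (α := Lˣ)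
  have hcardL : Nat.card L = p ^ 3 := GaloisField.card p 3 (by norm_num)
  have hcardU : Nat.card Lˣ = p^3 - 1 := by
    rw [Nat.card_units, hcardL]
  rw [hcardU] at hg
  set α := g ^ (p - 1) with hα
  have hdvd : (p - 1) ∣ (p^3 - 1) := ⟨n, hfact⟩
  have horder : orderOf α = n := by
    rw [hα, orderOf_pow' g (by omega : p - 1 ≠ 0), hg, Nat.gcd_eq_right hdvd, hfact,
      Nat.mul_div_cancel_left _ (by omega : 0 < p - 1)]
  set x : L := ((α : Lˣ) : L) with hx
  have hxu : ∀ k : ℕ, ((α ^ k : Lˣ) : L) = x ^ k := fun k => by push_cast [hx]; rfl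
  have hxn : x ^ n = 1 := by
    rw [← hxu, ← horder, pow_orderOf_eq_one, Units.val_one]
  -- distinctness helper
  have hdvd_le : ∀ i j : ℕ, i ≤ j → x ^ i = x ^ j → n ∣ (j - i) := by
    intro i j hij hxe
    have : (α : Lˣ) ^ i = α ^ j := Units.ext (by rw [Units.val_pow_eq_pow_val, Units.val_pow_eq_pow_val]; exact hxe)
    have hmod := (pow_eq_pow_iff_modEq).mp this
    rw [horder] at hmod
    exact (Nat.modEq_iff_dvd' hij).mp hmod
  -- x not in the prime field
  have hx_not : x ∉ (algebraMap (ZMod p) L).range := by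
    rintro ⟨c, hc⟩
    have hcne : c ≠ 0 := by
      rintro rfl
      rw [map_zero] at hc
      exact (Units.ne_zero α) hc.symm
    have hcp : c ^ (p - 1) = 1 := ZMod.pow_card_sub_one_eq_one hcne
    have : x ^ (p-1) = 1 := by
      rw [← hc, ← map_pow, hcp, _root_.map_one]
    have h1 : x ^ 1 = x ^ p := by
      have : x ^ (p - 1) * x = x := by rw [this, one_mul]
      rw [pow_one]
      calc x = x ^ (p-1) * x := this.symm
        _ = x ^ (p - 1 + 1) := by rw [pow_succ]
        _ = x ^ p := by congr 1; omega
    have := Nat.le_of_dvd (by omega) (hdvd_le 1 p (by omega) h1)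
    omega
  -- the minimal polynomial
  have hint : IsIntegral (ZMod p) x := Algebra.IsIntegral.isIntegral x
  set m := minpoly (ZMod p) x with hm
  have hm_irr : Irreducible m := minpoly.irreducible hint
  have hm_monic : m.Monic := minpoly.monic hint
  have hfinrank : Module.finrank (ZMod p) L = 3 := GaloisField.finrank p (by norm_num)
  have hdeg3 : m.natDegree = 3 := by
    have hdvd' : m.natDegree ∣ 3 := hfinrank ▸ minpoly.degree_dvd hint
    have := (Nat.prime_three).eq_one_or_self_of_dvd _ hdvd'
    rcases this with h1 | h3
    · exact absurd (minpoly.natDegree_eq_one_iff.mp h1) hx_not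
    · exact h3
  -- Frobenius as an algebra hom
  have hfrobalg : ∀ (z : L), (aeval (z ^ p)) m = ((aeval z) m) ^ p := by
    intro z
    let φ : L →ₐ[ZMod p] L :=
      { toRingHom := frobenius L p
        commutes' := fun c => by
          show frobenius L p (algebraMap (ZMod p) L c) = algebraMap (ZMod p) L c
          rw [frobenius_def, ← map_pow, ZMod.pow_card] }
    have : φ z = z ^ p := rfl
    rw [← this, Polynomial.aeval_algHom_apply]
    rfl
  have haev : aeval x m = 0 := minpoly.aeval _ _
  have hroot1 : aeval (x ^ p) m = 0 := by rw [hfrobalg, haev, zero_pow]; omega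
  have hroot2 : aeval (x ^ (p^2)) m = 0 := by
    have : x ^ (p^2) = (x ^ p) ^ p := by rw [← pow_mul, pow_two]
    rw [this, hfrobalg, hroot1, zero_pow]; omega
  -- distinctness of the three roots
  have d01 : x ≠ x ^ p := by
    intro h
    have := Nat.le_of_dvd (by omega) (hdvd_le 1 p (by omega) (by rw [pow_one]; exact h))
    omega
  have d02 : x ≠ x ^ (p^2) := by
    intro h
    have := Nat.le_of_dvd (by omega) (hdvd_le 1 (p^2) (by omega) (by rw [pow_one]; exact h))
    omega
  have d12 : x ^ p ≠ x ^ (p^2) := by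
    intro h
    have := Nat.le_of_dvd (by omega) (hdvd_le p (p^2) (by omega) h)
    omega
  -- roots of the mapped polynomial
  set M := m.map (algebraMap (ZMod p) L) with hM
  have hM_monic : M.Monic := hm_monic.map _
  have hM_ne : M ≠ 0 := hM_monic.ne_zero
  have hM_deg : M.natDegree = 3 := by rw [hM, hm_monic.natDegree_map, hdeg3]
  have hmem : ∀ z : L, aeval z m = 0 → z ∈ M.roots := by
    intro z hz
    rw [Polynomial.mem_roots hM_ne, Polynomial.IsRoot, hM, Polynomial.eval_map,
      ← Polynomial.aeval_def, hz]
  classical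
  set T : Multiset L := {x, x ^ p, x ^ (p^2)} with hT
  have hTcard : Multiset.card T = 3 := rfl
  have hT_le : T ≤ M.roots := by
    rw [Multiset.le_iff_count]
    intro r
    by_cases h0 : r = x
    · have hc1 : Multiset.count r T = 1 := by
        simp [hT, Multiset.count_cons, Multiset.count_singleton, h0, d01, d02]
      rw [hc1, h0]
      exact Multiset.one_le_count_iff_mem.mpr (hmem _ haev)
    · by_cases h1 : r = x ^ p
      · have hc1 : Multiset.count r T = 1 := by
          simp [hT, Multiset.count_cons, Multiset.count_singleton, h1, Ne.symm d01, d12]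
        rw [hc1, h1]
        exact Multiset.one_le_count_iff_mem.mpr (hmem _ hroot1)
      · by_cases h2 : r = x ^ (p^2)
        · have hc1 : Multiset.count r T = 1 := by
            simp [hT, Multiset.count_cons, Multiset.count_singleton, h2, Ne.symm d02, Ne.symm d12]
          rw [hc1, h2]
          exact Multiset.one_le_count_iff_mem.mpr (hmem _ hroot2)
        · have hc0 : Multiset.count r T = 0 := by
            simp [hT, Multiset.count_cons, Multiset.count_singleton, h0, h1, h2]
          rw [hc0]
          omega
  have hroots : M.roots = T := by
    refine (Multiset.eq_of_le_of_card_le hT_le ?_).symm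
    rw [hTcard]
    exact (Polynomial.card_roots' M).trans (le_of_eq hM_deg)
  -- M is the product of the three linear factors
  have hprod_dvd := Polynomial.prod_multiset_X_sub_C_dvd M
  rw [hroots] at hprod_dvd
  set P : L[X] := (T.map fun r => X - C r).prod with hP
  have hPmonic : P.Monic := by
    apply Polynomial.monic_multiset_prod_of_monic
    intro r _
    exact Polynomial.monic_X_sub_C r
  have hPdeg : P.natDegree = 3 := by
    rw [hP, hT]
    simp only [Multiset.insert_eq_cons, Multiset.map_cons, Multiset.map_singleton,
      Multiset.prod_cons, Multiset.prod_singleton]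
    rw [Polynomial.natDegree_mul (Polynomial.X_sub_C_ne_zero _)
        (mul_ne_zero (Polynomial.X_sub_C_ne_zero _) (Polynomial.X_sub_C_ne_zero _)),
      Polynomial.natDegree_mul (Polynomial.X_sub_C_ne_zero _) (Polynomial.X_sub_C_ne_zero _),
      Polynomial.natDegree_X_sub_C, Polynomial.natDegree_X_sub_C, Polynomial.natDegree_X_sub_C]
  have hMP : M = P := by
    obtain ⟨q, hq⟩ := hprod_dvd
    have hqne : q ≠ 0 := by
      rintro rfl
      rw [mul_zero] at hq
      exact hM_ne hq
    have hdegq : q.natDegree = 0 := by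
      have := congrArg Polynomial.natDegree hq
      rw [hM_deg, Polynomial.natDegree_mul hPmonic.ne_zero hqne, hPdeg] at this
      omega
    have hqC : q = C (q.coeff 0) := Polynomial.eq_C_of_natDegree_eq_zero hdegq
    have hlead : q.coeff 0 = 1 := by
      have := congrArg Polynomial.leadingCoeff hq
      rw [hM_monic.leadingCoeff, Polynomial.leadingCoeff_mul, hPmonic.leadingCoeff, one_mul] at this
      rw [Polynomial.leadingCoeff, hdegq] at this
      exact this.symm
    rw [hq, hqC, hlead, Polynomial.C_1, mul_one]
  -- compute the constant coefficient
  have hcoeff0 : m.coeff 0 = -1 := by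
    apply (algebraMap (ZMod p) L).injective
    have h1 : (algebraMap (ZMod p) L) (m.coeff 0) = M.coeff 0 := (Polynomial.coeff_map _ 0).symm
    rw [h1, Polynomial.coeff_zero_eq_eval_zero, hMP, hP, hT]
    simp only [Multiset.insert_eq_cons, Multiset.map_cons, Multiset.map_singleton,
      Multiset.prod_cons, Multiset.prod_singleton, Polynomial.eval_mul, Polynomial.eval_sub,
      Polynomial.eval_X, Polynomial.eval_C, zero_sub]
    rw [show (-x) * (-(x^p) * -(x^(p^2))) = -(x * x^p * x^(p^2)) by ring,
      show x * x^p * x^(p^2) = x ^ (1 + p + p^2) by rw [pow_add, pow_add, pow_one],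
      show 1 + p + p^2 = n by omega, hxn]
    rw [map_neg, _root_.map_one]

  -- assemble
  refine ⟨m.coeff 2, m.coeff 1, ?_⟩
  have hmeq : m = fpoly (m.coeff 2) (m.coeff 1) := by
    ext k
    have hc3 : m.coeff 3 = 1 := by
      have := hm_monic.coeff_natDegree
      rwa [hdeg3] at this
    match k with
    | 0 => simp [fpoly, hcoeff0, Polynomial.coeff_one]
    | 1 => simp [fpoly, Polynomial.coeff_one]
    | 2 => simp [fpoly, Polynomial.coeff_one]
    | 3 => simp [fpoly, hc3, Polynomial.coeff_one]
    | (k+4) =>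
      rw [Polynomial.coeff_eq_zero_of_natDegree_lt (by omega : m.natDegree < k + 4)]
      simp [fpoly, Polynomial.coeff_one, Polynomial.coeff_X, Polynomial.coeff_C]
  rw [← hmeq]
  exact hm_irr


lemma Mcomp_map {S : Type*} [CommRing S] (f : R →+* S) (a b : R) :
    (Mcomp a b).map f = Mcomp (f a) (f b) := by
  ext i j
  fin_cases i <;> fin_cases j <;> simp [Mcomp]

lemma combo_map {S : Type*} [CommRing S] (f : R →+* S) (a b d₀ d₁ d₂ : R) :
    (d₀ • (1 : Matrix (Fin 3) (Fin 3) R) + d₁ • Mcomp a b + d₂ • (Mcomp a b)^2).map f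
      = f d₀ • (1 : Matrix (Fin 3) (Fin 3) S) + f d₁ • Mcomp (f a) (f b)
        + f d₂ • (Mcomp (f a) (f b))^2 := by
  ext i j
  fin_cases i <;> fin_cases j <;>
    simp [Mcomp, pow_two, Matrix.mul_apply, Fin.sum_univ_three, Matrix.map_apply,
      Matrix.one_apply, mul_comm]

lemma toZMod_ne_zero_of_norm_one {p : ℕ} [Fact p.Prime] {x : ℤ_[p]} (hx : ‖x‖ = 1) :
    PadicInt.toZMod x ≠ 0 := by
  intro h0
  have hker : x ∈ RingHom.ker (PadicInt.toZMod : ℤ_[p] →+* ZMod p) := h0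
  rw [PadicInt.ker_toZMod, PadicInt.maximalIdeal_eq_span_p, Ideal.mem_span_singleton] at hker
  have := (PadicInt.norm_lt_one_iff_dvd x).mpr hker
  rw [hx] at this
  exact lt_irrefl _ this

lemma norm_one_of_toZMod_ne_zero {p : ℕ} [Fact p.Prime] {x : ℤ_[p]}
    (hx : PadicInt.toZMod x ≠ 0) : ‖x‖ = 1 := by
  refine le_antisymm (PadicInt.norm_le_one x) ?_
  by_contra hlt
  push_neg at hlt
  have hdvd : (p : ℤ_[p]) ∣ x := (PadicInt.norm_lt_one_iff_dvd x).mp hlt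
  have : x ∈ RingHom.ker (PadicInt.toZMod : ℤ_[p] →+* ZMod p) := by
    rw [PadicInt.ker_toZMod, PadicInt.maximalIdeal_eq_span_p, Ideal.mem_span_singleton]
    exact hdvd
  exact hx this

lemma det_combo_ne (p : ℕ) [hp : Fact p.Prime] (a b : ZMod p)
    (hirr : Irreducible (fpoly a b)) (d₀ d₁ d₂ : ℚ_[p]) :
    (d₀ • (1 : Matrix (Fin 3) (Fin 3) ℚ_[p])
      + d₁ • Mcomp ((a.val : ℚ_[p])) ((b.val : ℚ_[p]))
      + d₂ • (Mcomp ((a.val : ℚ_[p])) ((b.val : ℚ_[p])))^2).det ≠ -(p : ℚ_[p])^2 := by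
  intro hdet
  have hp2 : 2 ≤ p := hp.out.two_le
  have hPne : (p : ℚ_[p]) ≠ 0 := Nat.cast_ne_zero.mpr hp.out.ne_zero
  have hpR1 : (1:ℝ) < (p:ℝ) := by exact_mod_cast hp.out.one_lt
  have hpR0 : (0:ℝ) < (p:ℝ) := by linarith
  -- not all coefficients vanish
  have hne : ¬(d₀ = 0 ∧ d₁ = 0 ∧ d₂ = 0) := by
    rintro ⟨rfl, rfl, rfl⟩
    simp at hdet
    exact hp.out.ne_zero hdet
  set r := max ‖d₀‖ (max ‖d₁‖ ‖d₂‖) with hr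
  have hle0 : ‖d₀‖ ≤ r := le_max_left _ _
  have hle1 : ‖d₁‖ ≤ r := le_trans (le_max_left _ _) (le_max_right _ _)
  have hle2 : ‖d₂‖ ≤ r := le_trans (le_max_right _ _) (le_max_right _ _)
  have hrpos : 0 < r := by
    rcases not_and_or.mp hne with h | h
    · exact lt_of_lt_of_le (norm_pos_iff.mpr h) hle0
    rcases not_and_or.mp h with h | h
    · exact lt_of_lt_of_le (norm_pos_iff.mpr h) hle1
    · exact lt_of_lt_of_le (norm_pos_iff.mpr h) hle2
  have hmax : ‖d₀‖ = r ∨ ‖d₁‖ = r ∨ ‖d₂‖ = r := by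
    rcases max_choice ‖d₀‖ (max ‖d₁‖ ‖d₂‖) with h | h
    · exact Or.inl (hr.trans h).symm
    · rcases max_choice ‖d₁‖ ‖d₂‖ with h' | h'
      · exact Or.inr (Or.inl ((hr.trans h).trans h').symm)
      · exact Or.inr (Or.inr ((hr.trans h).trans h').symm)
  -- find the valuation of the max
  obtain ⟨e, hemax, hene⟩ : ∃ e : ℚ_[p], ‖e‖ = r ∧ e ≠ 0 := by
    rcases hmax with h | h | h
    · exact ⟨d₀, h, by intro h0; rw [h0, norm_zero] at h; exact hrpos.ne h⟩
    · exact ⟨d₁, h, by intro h0; rw [h0, norm_zero] at h; exact hrpos.ne h⟩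
    · exact ⟨d₂, h, by intro h0; rw [h0, norm_zero] at h; exact hrpos.ne h⟩
  set m : ℤ := e.valuation with hm
  have hrval : r = (p : ℝ) ^ (-m) := by rw [← hemax]; exact Padic.norm_eq_zpow_neg_valuation hene
  set t : ℚ_[p] := (p : ℚ_[p]) ^ (-m) with ht
  have htnorm : ‖t‖ = (p : ℝ) ^ m := by
    rw [ht, Padic.norm_p_zpow, neg_neg]
  have hbound : ∀ d : ℚ_[p], ‖d‖ ≤ r → ‖t * d‖ ≤ 1 := by
    intro d hd
    rw [norm_mul, htnorm]
    calc (p:ℝ)^m * ‖d‖ ≤ (p:ℝ)^m * r := by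
          apply mul_le_mul_of_nonneg_left hd (le_of_lt (zpow_pos hpR0 m))
      _ = 1 := by rw [hrval, ← zpow_add₀ (ne_of_gt hpR0)]; simp
  have hnorm_te : ‖t * e‖ = 1 := by
    rw [norm_mul, htnorm, hemax, hrval, ← zpow_add₀ (ne_of_gt hpR0)]
    simp
  -- lift to ℤ_p
  set e₀ : ℤ_[p] := ⟨t * d₀, hbound d₀ hle0⟩ with he₀
  set e₁ : ℤ_[p] := ⟨t * d₁, hbound d₁ hle1⟩ with he₁
  set e₂ : ℤ_[p] := ⟨t * d₂, hbound d₂ hle2⟩ with he₂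
  set AZ : Matrix (Fin 3) (Fin 3) ℤ_[p] := Mcomp ((a.val : ℤ_[p])) ((b.val : ℤ_[p])) with hAZ
  set E : Matrix (Fin 3) (Fin 3) ℤ_[p] := e₀ • 1 + e₁ • AZ + e₂ • AZ^2 with hE
  -- the determinant of E, seen in ℚ_p
  have hcoe_det : ((E.det : ℤ_[p]) : ℚ_[p])
      = ((t * d₀) • (1 : Matrix (Fin 3) (Fin 3) ℚ_[p])
        + (t * d₁) • Mcomp ((a.val : ℚ_[p])) ((b.val : ℚ_[p]))
        + (t * d₂) • (Mcomp ((a.val : ℚ_[p])) ((b.val : ℚ_[p])))^2).det := by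
    have h1 : (PadicInt.Coe.ringHom (p := p)) E.det = (E.map (PadicInt.Coe.ringHom (p := p))).det :=
      RingHom.map_det _ _
    have h2 : E.map (PadicInt.Coe.ringHom (p := p))
        = (t * d₀) • (1 : Matrix (Fin 3) (Fin 3) ℚ_[p])
          + (t * d₁) • Mcomp ((a.val : ℚ_[p])) ((b.val : ℚ_[p]))
          + (t * d₂) • (Mcomp ((a.val : ℚ_[p])) ((b.val : ℚ_[p])))^2 := by
      rw [hE, hAZ, combo_map]
      norm_cast
    rw [← h2, ← h1]
    rfl
  have hsmul : ((t * d₀) • (1 : Matrix (Fin 3) (Fin 3) ℚ_[p])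
        + (t * d₁) • Mcomp ((a.val : ℚ_[p])) ((b.val : ℚ_[p]))
        + (t * d₂) • (Mcomp ((a.val : ℚ_[p])) ((b.val : ℚ_[p])))^2)
      = t • (d₀ • (1 : Matrix (Fin 3) (Fin 3) ℚ_[p])
        + d₁ • Mcomp ((a.val : ℚ_[p])) ((b.val : ℚ_[p]))
        + d₂ • (Mcomp ((a.val : ℚ_[p])) ((b.val : ℚ_[p])))^2) := by
    rw [smul_add, smul_add, smul_smul, smul_smul, smul_smul]
  have hdetE : ((E.det : ℤ_[p]) : ℚ_[p]) = -(t^3 * (p:ℚ_[p])^2) := by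
    rw [hcoe_det, hsmul, Matrix.det_smul, hdet]
    simp
  -- E mod p
  have hmodE : E.map (PadicInt.toZMod (p := p))
      = (PadicInt.toZMod e₀) • (1 : Matrix (Fin 3) (Fin 3) (ZMod p))
        + (PadicInt.toZMod e₁) • Mcomp a b + (PadicInt.toZMod e₂) • (Mcomp a b)^2 := by
    rw [hE, hAZ, combo_map]
    congr 2 <;> rw [map_natCast] <;> simp [ZMod.natCast_val, ZMod.cast_id]
  -- one of the eᵢ is a unit mod p
  have hone : PadicInt.toZMod e₀ ≠ 0 ∨ PadicInt.toZMod e₁ ≠ 0 ∨ PadicInt.toZMod e₂ ≠ 0 := by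
    rcases hmax with h | h | h
    · exact Or.inl (toZMod_ne_zero_of_norm_one (by
        rw [PadicInt.norm_def, he₀]
        show ‖t * d₀‖ = 1
        rw [norm_mul, htnorm, h, hrval, ← zpow_add₀ (ne_of_gt hpR0)]; simp))
    · exact Or.inr (Or.inl (toZMod_ne_zero_of_norm_one (by
        rw [PadicInt.norm_def, he₁]
        show ‖t * d₁‖ = 1
        rw [norm_mul, htnorm, h, hrval, ← zpow_add₀ (ne_of_gt hpR0)]; simp)))
    · exact Or.inr (Or.inr (toZMod_ne_zero_of_norm_one (by
        rw [PadicInt.norm_def, he₂]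
        show ‖t * d₂‖ = 1
        rw [norm_mul, htnorm, h, hrval, ← zpow_add₀ (ne_of_gt hpR0)]; simp)))
  have hnz : ¬(PadicInt.toZMod e₀ = 0 ∧ PadicInt.toZMod e₁ = 0 ∧ PadicInt.toZMod e₂ = 0) := by
    rintro ⟨h0, h1, h2⟩
    rcases hone with h | h | h <;> [exact h h0; exact h h1; exact h h2]
  have hunit : IsUnit (E.map (PadicInt.toZMod (p := p))) := by
    rw [hmodE]
    exact isUnit_combo hirr hnz
  have hdet_ne : PadicInt.toZMod E.det ≠ 0 := by
    have h1 : (PadicInt.toZMod (p := p)) E.det = (E.map (PadicInt.toZMod (p := p))).det :=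
      RingHom.map_det _ _
    rw [h1]
    exact (Matrix.isUnit_iff_isUnit_det _).mp hunit |>.ne_zero
  have hnormdetE : ‖E.det‖ = 1 := norm_one_of_toZMod_ne_zero hdet_ne
  -- final contradiction
  have hval : ‖((E.det : ℤ_[p]) : ℚ_[p])‖ = 1 := by
    rw [← PadicInt.norm_def, hnormdetE]
  rw [hdetE] at hval
  have ht3 : t^3 = (p:ℚ_[p]) ^ (-m * 3) := by
    rw [ht, ← zpow_natCast ((p:ℚ_[p]) ^ (-m)) 3, ← _root_.zpow_mul]
    norm_num
  have hnorm_eq : ‖-(t ^ 3 * (p:ℚ_[p]) ^ 2)‖ = (p:ℝ) ^ (m*3 + (-2 : ℤ)) := by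
    rw [norm_neg, norm_mul, ht3, Padic.norm_p_zpow, Padic.norm_p_pow,
      zpow_add₀ (ne_of_gt hpR0)]
    norm_num
  rw [hnorm_eq] at hval
  have hexp : m*3 + (-2 : ℤ) = 0 :=
    zpow_right_injective₀ hpR0 (by linarith : (p:ℝ) ≠ 1) (hval.trans (zpow_zero _).symm)
  omega


end Aux

section Main

lemma fpoly_map {R S : Type*} [CommRing R] [CommRing S] (f : R →+* S) (a b : R) :
    (fpoly a b).map f = fpoly (f a) (f b) := by
  simp [fpoly, Polynomial.map_add, Polynomial.map_sub, Polynomial.map_pow,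
    Polynomial.map_mul, Polynomial.map_X, Polynomial.map_C, Polynomial.map_one]

lemma irred_fpoly_Qp (p : ℕ) [hp : Fact p.Prime] (a b : ZMod p)
    (hirr : Irreducible (fpoly a b)) :
    Irreducible (fpoly ((a.val : ℚ_[p])) ((b.val : ℚ_[p]))) := by
  have hZ : Irreducible (fpoly ((a.val : ℤ_[p])) ((b.val : ℤ_[p]))) := by
    apply (fpoly_monic _ _).irreducible_of_irreducible_map (PadicInt.toZMod (p := p))
    rw [fpoly_map]
    have ha : (PadicInt.toZMod (p := p)) ((a.val : ℤ_[p])) = a := by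
      rw [map_natCast]; simp [ZMod.natCast_val, ZMod.cast_id]
    have hb : (PadicInt.toZMod (p := p)) ((b.val : ℤ_[p])) = b := by
      rw [map_natCast]; simp [ZMod.natCast_val, ZMod.cast_id]
    rw [ha, hb]
    exact hirr
  have := ((fpoly_monic ((a.val : ℤ_[p])) ((b.val : ℤ_[p]))).irreducible_iff_irreducible_map_fraction_map
    (K := ℚ_[p])).mp hZ
  rwa [fpoly_map] at this

variable {K : Type*} [Field K]

lemma detA (P a b : K) (hP : P ≠ 0) :
    (!![0,0,P; P⁻¹,0,-b; 0,1,-a] : Matrix (Fin 3) (Fin 3) K).det = 1 := by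
  rw [Matrix.det_fin_three]
  simp
  field_simp

lemma charA (P a b : K) (hP : P ≠ 0) :
    (!![0,0,P; P⁻¹,0,-b; 0,1,-a] : Matrix (Fin 3) (Fin 3) K).charpoly = fpoly a b := by
  have hCP : (C P * C P⁻¹ : K[X]) = 1 := by
    rw [← Polynomial.C_mul, mul_inv_cancel₀ hP, Polynomial.C_1]
  rw [Matrix.charpoly, Matrix.det_fin_three]
  simp [charmatrix_apply, Matrix.one_apply, fpoly]
  linear_combination (-1 : K[X]) * hCP

lemma MA_eq (P a b : K) (hP : P ≠ 0) :
    (!![P,0,0; 0,1,0; 0,0,1] : Matrix (Fin 3) (Fin 3) K) * Mcomp a b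
      = !![0,0,P; P⁻¹,0,-b; 0,1,-a] * !![P,0,0; 0,1,0; 0,0,1] := by
  ext i j
  fin_cases i <;> fin_cases j <;>
    simp [Mcomp, Matrix.mul_apply, Fin.sum_univ_three, Matrix.vecHead, Matrix.vecTail] <;>
    try field_simp

lemma detM (P : K) : (!![P,0,0; 0,1,0; 0,0,1] : Matrix (Fin 3) (Fin 3) K).det = P := by
  rw [Matrix.det_fin_three]; simp

lemma Mcomp_transpose (a b : K) :
    (Mcomp a b)ᵀ = !![0,1,0; 0,0,1; 1,-b,-a] := by
  ext i j
  fin_cases i <;> fin_cases j <;> simp [Mcomp, Matrix.transpose_apply]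

lemma SA_eq (a b : K) :
    (!![b,1,0; 1,0,0; 0,0,1] : Matrix (Fin 3) (Fin 3) K) * Mcomp a b
      = (Mcomp a b)ᵀ * !![b,1,0; 1,0,0; 0,0,1] := by
  rw [Mcomp_transpose]
  ext i j
  fin_cases i <;> fin_cases j <;>
    simp [Mcomp, Matrix.mul_apply, Fin.sum_univ_three, Matrix.vecHead, Matrix.vecTail]

lemma detS (a b : K) : (!![b,1,0; 1,0,0; 0,0,1] : Matrix (Fin 3) (Fin 3) K).det = -1 := by
  rw [Matrix.det_fin_three]; simp


/-- For `p` an odd prime, there exists `A ∈ SL(3,ℚ_p)` with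
irreducible characteristic polynomial which is not a product of two symmetric
matrices in `SL(3,ℚ_p)`; in particular `A` is not conjugate to `ᵗA` by any element
of `SL(3,ℚ_p)`. -/
theorem stmt14 (p : ℕ) [Fact p.Prime] (hodd : Odd p) :
    ∃ A : Matrix (Fin 3) (Fin 3) ℚ_[p], A.det = 1 ∧ Irreducible A.charpoly ∧
      (¬ ∃ S₁ S₂ : Matrix (Fin 3) (Fin 3) ℚ_[p],
        S₁ᵀ = S₁ ∧ S₂ᵀ = S₂ ∧ S₁.det = 1 ∧ S₂.det = 1 ∧ A = S₁ * S₂) ∧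
      (¬ ∃ C : Matrix (Fin 3) (Fin 3) ℚ_[p], C.det = 1 ∧ C * A * C⁻¹ = Aᵀ) := by
  classical
  obtain ⟨a, b, hirr⟩ := exists_irred p
  set P : ℚ_[p] := (p : ℚ_[p]) with hPdef
  have hPne : P ≠ 0 := Nat.cast_ne_zero.mpr (Fact.out (p := p.Prime)).ne_zero
  set aQ : ℚ_[p] := ((a.val : ℚ_[p])) with haQ
  set bQ : ℚ_[p] := ((b.val : ℚ_[p])) with hbQ
  set A : Matrix (Fin 3) (Fin 3) ℚ_[p] := !![0,0,P; P⁻¹,0,-bQ; 0,1,-aQ] with hA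
  set M : Matrix (Fin 3) (Fin 3) ℚ_[p] := !![P,0,0; 0,1,0; 0,0,1] with hM
  set S : Matrix (Fin 3) (Fin 3) ℚ_[p] := !![bQ,1,0; 1,0,0; 0,0,1] with hS
  set A₀ : Matrix (Fin 3) (Fin 3) ℚ_[p] := Mcomp aQ bQ with hA₀
  have hdetA : A.det = 1 := detA P aQ bQ hPne
  have hcharA : A.charpoly = fpoly aQ bQ := charA P aQ bQ hPne
  have hirrQ : Irreducible A.charpoly := by
    rw [hcharA]; exact irred_fpoly_Qp p a b hirr
  have hMA : M * A₀ = A * M := MA_eq P aQ bQ hPne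
  have hdetM : M.det = P := detM P
  have hSA : S * A₀ = A₀ᵀ * S := SA_eq aQ bQ
  have hdetS : S.det = -1 := detS aQ bQ
  have hSunit : IsUnit S.det := by rw [hdetS]; exact isUnit_one.neg
  -- the key fact: A is not conjugate to its transpose inside SL₃
  have hnonconj : ¬ ∃ C : Matrix (Fin 3) (Fin 3) ℚ_[p], C.det = 1 ∧ C * A * C⁻¹ = Aᵀ := by
    rintro ⟨Cm, hdetC, hconj⟩
    have hCunit : IsUnit Cm.det := by rw [hdetC]; exact isUnit_one
    have hCA : Cm * A = Aᵀ * Cm := by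
      calc Cm * A = Cm * A * (Cm⁻¹ * Cm) := by
            rw [Matrix.nonsing_inv_mul _ hCunit, mul_one]
        _ = (Cm * A * Cm⁻¹) * Cm := by simp only [Matrix.mul_assoc]
        _ = Aᵀ * Cm := by rw [hconj]
    set D : Matrix (Fin 3) (Fin 3) ℚ_[p] := Mᵀ * Cm * M with hD
    have hDA : D * A₀ = A₀ᵀ * D := by
      calc D * A₀ = Mᵀ * (Cm * (M * A₀)) := by simp only [hD, Matrix.mul_assoc]
        _ = Mᵀ * (Cm * (A * M)) := by rw [hMA]
        _ = Mᵀ * ((Cm * A) * M) := by simp only [Matrix.mul_assoc]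
        _ = Mᵀ * ((Aᵀ * Cm) * M) := by rw [hCA]
        _ = (Mᵀ * Aᵀ) * (Cm * M) := by simp only [Matrix.mul_assoc]
        _ = (A * M)ᵀ * (Cm * M) := by rw [Matrix.transpose_mul]
        _ = (M * A₀)ᵀ * (Cm * M) := by rw [hMA]
        _ = (A₀ᵀ * Mᵀ) * (Cm * M) := by rw [Matrix.transpose_mul]
        _ = A₀ᵀ * D := by simp only [hD, Matrix.mul_assoc]
    have hdetD : D.det = P^2 := by
      rw [hD, Matrix.det_mul, Matrix.det_mul, Matrix.det_transpose, hdetM, hdetC]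
      ring
    set B : Matrix (Fin 3) (Fin 3) ℚ_[p] := S⁻¹ * D with hB
    have hBA : B * A₀ = A₀ * B := by
      calc B * A₀ = S⁻¹ * (D * A₀) := by simp only [hB, Matrix.mul_assoc]
        _ = S⁻¹ * (A₀ᵀ * D) := by rw [hDA]
        _ = S⁻¹ * (A₀ᵀ * ((S * S⁻¹) * D)) := by
            rw [Matrix.mul_nonsing_inv _ hSunit, Matrix.one_mul]
        _ = S⁻¹ * ((A₀ᵀ * S) * (S⁻¹ * D)) := by simp only [Matrix.mul_assoc]
        _ = S⁻¹ * ((S * A₀) * (S⁻¹ * D)) := by rw [hSA]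
        _ = (S⁻¹ * S) * (A₀ * (S⁻¹ * D)) := by simp only [Matrix.mul_assoc]
        _ = A₀ * B := by rw [Matrix.nonsing_inv_mul _ hSunit, Matrix.one_mul, hB]
    have hdetB : B.det = -P^2 := by
      rw [hB, Matrix.det_mul, Matrix.det_nonsing_inv, hdetS, hdetD]
      simp
    have hBcomb : B = B 0 0 • 1 + B 1 0 • A₀ + B 2 0 • A₀^2 := comm_Mcomp hBA
    have : (B 0 0 • (1 : Matrix (Fin 3) (Fin 3) ℚ_[p]) + B 1 0 • A₀ + B 2 0 • A₀^2).det
        = -(p : ℚ_[p])^2 := by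
      rw [← hBcomb, hdetB, hPdef]
    exact det_combo_ne p a b hirr (B 0 0) (B 1 0) (B 2 0) this
  refine ⟨A, hdetA, hirrQ, ?_, hnonconj⟩
  -- a symmetric SL₃ factorization would give an SL₃ conjugation to the transpose
  rintro ⟨S₁, S₂, h1t, h2t, h1d, h2d, hAS⟩
  have h1unit : IsUnit S₁.det := by rw [h1d]; exact isUnit_one
  apply hnonconj
  refine ⟨S₁⁻¹, ?_, ?_⟩
  · rw [Matrix.det_nonsing_inv, h1d]
    simp
  · rw [Matrix.nonsing_inv_nonsing_inv _ h1unit, hAS]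
    calc S₁⁻¹ * (S₁ * S₂) * S₁ = (S₁⁻¹ * S₁) * (S₂ * S₁) := by
          simp only [Matrix.mul_assoc]
      _ = S₂ * S₁ := by rw [Matrix.nonsing_inv_mul _ h1unit, Matrix.one_mul]
      _ = (S₁ * S₂)ᵀ := by rw [Matrix.transpose_mul, h1t, h2t]
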